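/- Let X be a metric space, let I ⊔ J be a partition of {1,…,n}, let w_1,…,w_n be positive weights summing to 1 with W_I = ∑_{i∈I} w_i > 1/2, let K be a nonempty bounded subset of X containing z_j for all j ∈ J, and suppose all contaminated points are equal to a single point z' ∈ X. Define F'(z) = ∑_{j∈J} w_j d(z, z_j) + W_I · d(z, z'). Then every minimizer z̄ of F' satisfies d(z̄, K) ≥ d(z', K) − ((1 − W_I)/(2 W_I − 1)) · diam(K). In particular, if contaminations are chosen with d(z', K) → ∞, then d(z̄, K) → ∞. -/

import Mathlib

open scoped BigOperators

/-- Breakdown, case `W_I > 1/2`. If the contaminated weight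
exceeds `1/2` and all contaminated points equal a single point `z'`, then every
minimizer `z̄` of the contaminated objective satisfies
`d(z̄, K) ≥ d(z', K) − ((1 − W_I)/(2 W_I − 1)) · diam(K)`; in particular, the
median diverges as `d(z', K) → ∞`. -/
theorem median_unbounded_of_contamination_gt_half
    {X : Type*} [MetricSpace X]
    {n : ℕ} (I J : Finset (Fin n))
    (hdisj : Disjoint I J) (hcover : I ∪ J = Finset.univ)
    (w : Fin n → ℝ) (hw : ∀ i, 0 < w i) (hsum : ∑ i, w i = 1)
    (hWI : 1 / 2 < ∑ i ∈ I, w i)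
    (K : Set X) (hK : K.Nonempty) (hKb : Bornology.IsBounded K)
    (z : Fin n → X) (hz : ∀ j ∈ J, z j ∈ K)
    (z' : X)
    (zbar : X)
    (hmin : ∀ p : X,
      (∑ j ∈ J, w j * dist zbar (z j)) + (∑ i ∈ I, w i) * dist zbar z' ≤
        (∑ j ∈ J, w j * dist p (z j)) + (∑ i ∈ I, w i) * dist p z') :
    Metric.infDist z' K -
        ((1 - ∑ i ∈ I, w i) / (2 * (∑ i ∈ I, w i) - 1)) * Metric.diam K ≤
      Metric.infDist zbar K := by
  set W : ℝ := ∑ i ∈ I, w i with hW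
  have hsplit : (∑ j ∈ J, w j) = 1 - W := by
    have : W + ∑ j ∈ J, w j = 1 := by
      rw [hW, ← Finset.sum_union hdisj, hcover]; exact hsum
    linarith
  -- minimality at p = z'
  have h1 := hmin z'
  rw [dist_self, mul_zero, add_zero] at h1
  -- triangle inequality: dist z' (z j) ≤ dist z' zbar + dist zbar (z j)
  have h2 : ∑ j ∈ J, w j * dist z' (z j) ≤
      ∑ j ∈ J, w j * dist zbar (z j) + (1 - W) * dist zbar z' := by
    rw [← hsplit, Finset.sum_mul, ← Finset.sum_add_distrib]
    refine Finset.sum_le_sum fun j hj => ?_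
    have := dist_triangle z' zbar (z j)
    have hwj := (hw j).le
    rw [dist_comm zbar z']
    nlinarith [dist_nonneg (x := z') (y := zbar)]
  have hd : dist zbar z' = 0 := by
    have hnn : 0 ≤ dist zbar z' := dist_nonneg
    nlinarith
  have hzz : zbar = z' := by rwa [dist_eq_zero] at hd
  subst hzz
  have hterm : 0 ≤ ((1 - W) / (2 * W - 1)) * Metric.diam K := by
    have hWle : W ≤ 1 := by
      rw [← hsum, hW]
      exact Finset.sum_le_sum_of_subset_of_nonneg (Finset.subset_univ I)
        (fun i _ _ => (hw i).le)
    have : (0:ℝ) ≤ (1 - W) / (2 * W - 1) :=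
      div_nonneg (by linarith) (by linarith)
    exact mul_nonneg this Metric.diam_nonneg
  linarith
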